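/- If in a biased $(b{:}1)$ Maker–Breaker game with $k$ pairwise disjoint winning sets of size $s$ Maker wins whenever $s\le (b-1)\sum_{i=1}^{k-1}1/i$, then in the biased $(b{:}2)$ game with $k+1$ pairwise disjoint winning sets of size at most $s$, Maker wins whenever $s \le (\lfloor b/2\rfloor - 1)\sum_{i=1}^{k-1}\frac{1}{i}$. -/

import Mathlib

/-- `MWin board F a b t M B` : in the biased `(a : b)` Maker–Breaker positional game on
the board `board` with family of winning sets `F`, from the position where Maker has
claimed `M`, Breaker has claimed `B`, and it is Maker's turn iff `t = true`, Maker has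
a winning strategy.  In each move Maker claims `a` previously unclaimed elements and
Breaker claims `b` previously unclaimed elements (or all remaining elements, if fewer
are left).  Maker wins when he has claimed all elements of some winning set. -/
inductive MWin {α : Type*} [DecidableEq α] (board : Finset α) (F : Set (Finset α))
    (a b : ℕ) : Bool → Finset α → Finset α → Prop
  | win (t : Bool) (M B A : Finset α) (hA : A ∈ F) (hsub : A ⊆ M) : MWin board F a b t M B
  | maker (M B m : Finset α) (hm : m ⊆ board \ (M ∪ B))
      (hcard : m.card = min a (board \ (M ∪ B)).card)
      (h : MWin board F a b false (M ∪ m) B) : MWin board F a b true M B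
  | breaker (M B : Finset α)
      (h : ∀ m ⊆ board \ (M ∪ B), m.card = min b (board \ (M ∪ B)).card →
        MWin board F a b true M (B ∪ m)) : MWin board F a b false M B


noncomputable def Hh (n : ℕ) : ℝ := ∑ i ∈ Finset.Icc 1 n, (1:ℝ)/i

noncomputable def rho (m : ℕ) : ℝ := if m ≤ 1 then 2 else 3/(2*((m:ℝ)-1)) + 1/m

noncomputable def Vf (a' m : ℕ) : ℝ := ((a':ℝ)-1) * Hh (m-2) + a' * rho m

lemma Hh_nonneg (n : ℕ) : 0 ≤ Hh n := by
  apply Finset.sum_nonneg; intro i _; positivity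

lemma Hh_succ (n : ℕ) : Hh (n+1) = Hh n + 1/(n+1) := by
  unfold Hh
  rw [Finset.sum_Icc_succ_top (by omega : 1 ≤ n+1)]
  push_cast; ring_nf

lemma rho_two_le (m : ℕ) (h : 2 ≤ m) : rho m = 3/(2*((m:ℝ)-1)) + 1/m := by
  unfold rho; rw [if_neg (by omega)]

lemma rho_nonneg (m : ℕ) : 0 ≤ rho m := by
  unfold rho
  split
  · norm_num
  · have h2 : (2:ℝ) ≤ (m:ℝ) := by exact_mod_cast Nat.le_of_not_lt (by omega)
    have h1 : (0:ℝ) < (m:ℝ) - 1 := by linarith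
    have h0 : (0:ℝ) < (m:ℝ) := by linarith
    positivity

lemma Vf_one (a' : ℕ) : Vf a' 1 = 2*a' := by
  unfold Vf Hh rho; norm_num [mul_comm]

lemma Vf_two (a' : ℕ) : Vf a' 2 = 2*a' := by
  unfold Vf Hh rho; norm_num [mul_comm]

-- d = 1 step
lemma Vf_step1 (a' b j : ℕ) (ha : 2 ≤ a') (hab : 2*a' ≤ b) :
    Vf a' (j+3) ≤ Vf a' (j+2) + (b:ℝ)/(j+3) - 1/(j+2) := by
  have hb : (2*(a':ℝ)) ≤ b := by exact_mod_cast hab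
  have hA : (2:ℝ) ≤ a' := by exact_mod_cast ha
  have hx : (0:ℝ) ≤ (j:ℝ) := Nat.cast_nonneg j
  have h1 : Vf a' (j+3) = ((a':ℝ)-1) * Hh (j+1) + a' * (3/(2*((j:ℝ)+2)) + 1/((j:ℝ)+3)) := by
    unfold Vf
    rw [show j+3-2 = j+1 by omega, rho_two_le _ (by omega)]
    push_cast; ring_nf
  have h2 : Vf a' (j+2) = ((a':ℝ)-1) * Hh j + a' * (3/(2*((j:ℝ)+1)) + 1/((j:ℝ)+2)) := by
    unfold Vf
    rw [show j+2-2 = j by omega, rho_two_le _ (by omega)]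
    push_cast; ring_nf
  rw [h1, h2, Hh_succ]
  set x := (j:ℝ) with hxdef
  have e1 : (0:ℝ) < x+1 := by linarith
  have e2 : (0:ℝ) < x+2 := by linarith
  have e3 : (0:ℝ) < x+3 := by linarith
  have hbx : (2*(a':ℝ))/(x+3) ≤ (b:ℝ)/(x+3) := div_le_div_of_nonneg_right hb e3.le
  have key : ((a':ℝ)-1)/(x+1) + (a':ℝ) * (3/(2*(x+2)) + 1/(x+3)) + 1/(x+2)
      ≤ (a':ℝ) * (3/(2*(x+1)) + 1/(x+2)) + 2*(a':ℝ)/(x+3) := by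
    rw [← sub_nonneg]
    have hA0 : (0:ℝ) ≤ a' := by linarith
    have hrw : (a':ℝ) * (3/(2*(x+1)) + 1/(x+2)) + 2*(a':ℝ)/(x+3)
        - (((a':ℝ)-1)/(x+1) + (a':ℝ) * (3/(2*(x+2)) + 1/(x+3)) + 1/(x+2))
        = (6 + 7*(a':ℝ) + 2*x + 7*x*(a':ℝ) + 2*x^2*(a':ℝ)) / (2*(x+1)*(x+2)*(x+3)) := by
      field_simp
      ring
    rw [hrw]
    positivity
  have expand : ((a':ℝ)-1)*(Hh j + 1/(x+1)) = ((a':ℝ)-1)*Hh j + ((a':ℝ)-1)*(1/(x+1)) := by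
    ring
  have hE1 : ((a':ℝ)-1)/(x+1) = ((a':ℝ)-1)*(1/(x+1)) := by ring
  linarith [key, hbx, expand, hE1]

-- d = 2 step
lemma Vf_step2 (a' b j : ℕ) (ha : 2 ≤ a') (hab : 2*a' ≤ b) :
    Vf a' (j+3) ≤ Vf a' (j+1) + (b:ℝ)/(j+3) - 2/(j+1) := by
  have hb : (2*(a':ℝ)) ≤ b := by exact_mod_cast hab
  have hA : (2:ℝ) ≤ a' := by exact_mod_cast ha
  rcases Nat.eq_zero_or_pos j with hj0 | hjp
  · subst hj0
    have h1 : Vf a' 3 = ((a':ℝ)-1) + a' * (13/12) := by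
      unfold Vf Hh
      rw [rho_two_le _ (by omega)]
      norm_num
    rw [h1, Vf_one]
    norm_num
    linarith
  · obtain ⟨i, rfl⟩ : ∃ i, j = i + 1 := ⟨j - 1, by omega⟩
    have h1 : Vf a' (i+4) = ((a':ℝ)-1) * Hh (i+2) + a' * (3/(2*((i:ℝ)+3)) + 1/((i:ℝ)+4)) := by
      unfold Vf
      rw [show i+4-2 = i+2 by omega, rho_two_le _ (by omega)]
      push_cast; ring_nf
    have h2 : Vf a' (i+2) = ((a':ℝ)-1) * Hh i + a' * (3/(2*((i:ℝ)+1)) + 1/((i:ℝ)+2)) := by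
      unfold Vf
      rw [show i+2-2 = i by omega, rho_two_le _ (by omega)]
      push_cast; ring_nf
    rw [show i+1+3 = i+4 by omega, show i+1+1 = i+2 by omega, h1, h2, Hh_succ, Hh_succ]
    push_cast
    rw [show ((i:ℝ)+1+1) = (i:ℝ)+2 by ring, show ((i:ℝ)+1+3) = (i:ℝ)+4 by ring]
    set x := (i:ℝ) with hxdef
    have hx : (0:ℝ) ≤ x := Nat.cast_nonneg i
    have e1 : (0:ℝ) < x+1 := by linarith
    have e2 : (0:ℝ) < x+2 := by linarith
    have e3 : (0:ℝ) < x+3 := by linarith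
    have e4 : (0:ℝ) < x+4 := by linarith
    have hbx : (2*(a':ℝ))/(x+4) ≤ (b:ℝ)/(x+4) := div_le_div_of_nonneg_right hb e4.le
    have key : ((a':ℝ)-1)*(1/(x+1) + 1/(x+2)) + (a':ℝ) * (3/(2*(x+3)) + 1/(x+4)) + 2/(x+2)
        ≤ (a':ℝ) * (3/(2*(x+1)) + 1/(x+2)) + 2*(a':ℝ)/(x+4) := by
      rw [← sub_nonneg]
      have hA0 : (0:ℝ) ≤ a' := by linarith
      have hrw : (a':ℝ) * (3/(2*(x+1)) + 1/(x+2)) + 2*(a':ℝ)/(x+4)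
          - (((a':ℝ)-1)*(1/(x+1) + 1/(x+2)) + (a':ℝ) * (3/(2*(x+3)) + 1/(x+4)) + 2/(x+2))
          = (24 + 12*(a':ℝ) + 14*x + 6*x*(a':ℝ) + 2*x^2) / (2*(x+1)*(x+2)*(x+3)*(x+4)) := by
        field_simp
        ring
      rw [hrw]
      positivity
    have expand : ((a':ℝ)-1)*(Hh i + 1/(x+1) + 1/(x+2)) = ((a':ℝ)-1)*Hh i + ((a':ℝ)-1)*(1/(x+1) + 1/(x+2)) := by
      ring
    linarith [key, hbx, expand]

lemma sum_step (a' b : ℕ) (ha : 2 ≤ a') (hab : 2*a' ≤ b) (j j2 A T q2 p2 : ℕ)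
    (hj3 : 3 ≤ j) (hj2 : 1 ≤ j2) (hj2le : j2 ≤ j) (hdle : j - j2 ≤ 2)
    (hbT : b ≤ T)
    (hdiv : j * q2 + p2 = T - b) (hp2j : p2 < j)
    (hA : A + (j - j2) * q2 ≤ j * q2 + p2)
    (hsum : (T:ℝ) ≤ j * Vf a' j) :
    (A:ℝ) ≤ j2 * Vf a' j2 := by
  have hcdiv : (j:ℝ) * q2 + p2 = (T:ℝ) - b := by
    have h : ((j * q2 + p2 : ℕ) : ℝ) = ((T - b : ℕ) : ℝ) := by rw [hdiv]
    rw [Nat.cast_sub hbT] at h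
    push_cast at h
    exact h
  have hcp2 : (p2:ℝ) + 1 ≤ (j:ℝ) := by exact_mod_cast hp2j
  rcases (by omega : j2 = j ∨ j2 + 1 = j ∨ j2 + 2 = j) with hc | hc | hc
  · -- d = 0
    have hz : j - j2 = 0 := by omega
    rw [hz] at hA
    have hcA : (A:ℝ) ≤ (j:ℝ) * q2 + p2 := by
      have h : A ≤ j * q2 + p2 := by omega
      exact_mod_cast h
    rw [hc]
    have hb0 : (0:ℝ) ≤ b := Nat.cast_nonneg b
    linarith [hcdiv, hsum, hcA]
  · -- d = 1
    obtain ⟨t, ht⟩ : ∃ t, j = t + 3 := ⟨j - 3, by omega⟩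
    have hj2t : j2 = t + 2 := by omega
    have hz : j - j2 = 1 := by omega
    rw [hz] at hA
    subst ht hj2t
    have hx0 : (0:ℝ) ≤ (t:ℝ) := Nat.cast_nonneg t
    push_cast at hcdiv hcp2 hsum ⊢
    have F3 : (A:ℝ) + (q2:ℝ) ≤ ((t:ℝ)+3) * q2 + p2 := by
      have h : ((A + 1 * q2 : ℕ):ℝ) ≤ (((t+3) * q2 + p2 : ℕ):ℝ) := Nat.cast_le.mpr hA
      push_cast at h
      linarith
    have F5 := Vf_step1 a' b t ha hab
    have hx3 : (0:ℝ) < (t:ℝ) + 3 := by linarith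
    have hx2 : (0:ℝ) < (t:ℝ) + 2 := by linarith
    have F5' : ((t:ℝ)+3)*((t:ℝ)+2)*Vf a' (t+3)
        ≤ ((t:ℝ)+3)*((t:ℝ)+2)*Vf a' (t+2) + ((t:ℝ)+2)*(b:ℝ) - ((t:ℝ)+3) := by
      have h := mul_le_mul_of_nonneg_left F5
        (le_of_lt (by positivity : (0:ℝ) < ((t:ℝ)+3)*((t:ℝ)+2)))
      have e1 : ((t:ℝ)+3)*((t:ℝ)+2)*((b:ℝ)/((t:ℝ)+3)) = ((t:ℝ)+2)*(b:ℝ) := by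
        field_simp
      have e2 : ((t:ℝ)+3)*((t:ℝ)+2)*(1/((t:ℝ)+2)) = ((t:ℝ)+3) := by
        field_simp
      have e3 : ((t:ℝ)+3)*((t:ℝ)+2)*(Vf a' (t+2) + (b:ℝ)/((t:ℝ)+3) - 1/((t:ℝ)+2))
          = ((t:ℝ)+3)*((t:ℝ)+2)*Vf a' (t+2) + ((t:ℝ)+3)*((t:ℝ)+2)*((b:ℝ)/((t:ℝ)+3))
            - ((t:ℝ)+3)*((t:ℝ)+2)*(1/((t:ℝ)+2)) := by ring
      rw [e3, e1, e2] at h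
      linarith
    have F1x : (t:ℝ)*(((t:ℝ)+3)*q2 + p2) = (t:ℝ)*((T:ℝ) - b) := by rw [hcdiv]
    have G0 := mul_le_mul_of_nonneg_left F3 (le_of_lt hx3)
    have G1 : ((t:ℝ)+3)*A ≤ ((t:ℝ)+2)*((T:ℝ) - b) + (p2:ℝ) := by
      linarith [G0, F1x, hcdiv]
    have G2 : ((t:ℝ)+2)*((T:ℝ) - b) ≤ ((t:ℝ)+3)*((t:ℝ)+2)*Vf a' (t+3) - ((t:ℝ)+2)*(b:ℝ) := by
      have h := mul_le_mul_of_nonneg_left hsum (le_of_lt hx2)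
      linarith [h]
    have G3 : ((t:ℝ)+3)*A ≤ ((t:ℝ)+3)*(((t:ℝ)+2)*Vf a' (t+2)) - 1 := by
      linarith [G1, G2, F5', hcp2]
    by_contra hcon
    push_neg at hcon
    have := mul_lt_mul_of_pos_left hcon hx3
    linarith
  · -- d = 2
    obtain ⟨t, ht⟩ : ∃ t, j = t + 3 := ⟨j - 3, by omega⟩
    have hj2t : j2 = t + 1 := by omega
    have hz : j - j2 = 2 := by omega
    rw [hz] at hA
    subst ht hj2t
    have hx0 : (0:ℝ) ≤ (t:ℝ) := Nat.cast_nonneg t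
    push_cast at hcdiv hcp2 hsum ⊢
    have F3 : (A:ℝ) + 2*(q2:ℝ) ≤ ((t:ℝ)+3) * q2 + p2 := by
      have h : ((A + 2 * q2 : ℕ):ℝ) ≤ (((t+3) * q2 + p2 : ℕ):ℝ) := Nat.cast_le.mpr hA
      push_cast at h
      linarith
    have F5 := Vf_step2 a' b t ha hab
    have hx3 : (0:ℝ) < (t:ℝ) + 3 := by linarith
    have hx1 : (0:ℝ) < (t:ℝ) + 1 := by linarith
    have F5' : ((t:ℝ)+3)*((t:ℝ)+1)*Vf a' (t+3)
        ≤ ((t:ℝ)+3)*((t:ℝ)+1)*Vf a' (t+1) + ((t:ℝ)+1)*(b:ℝ) - 2*((t:ℝ)+3) := by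
      have h := mul_le_mul_of_nonneg_left F5
        (le_of_lt (by positivity : (0:ℝ) < ((t:ℝ)+3)*((t:ℝ)+1)))
      have e1 : ((t:ℝ)+3)*((t:ℝ)+1)*((b:ℝ)/((t:ℝ)+3)) = ((t:ℝ)+1)*(b:ℝ) := by
        field_simp
      have e2 : ((t:ℝ)+3)*((t:ℝ)+1)*(2/((t:ℝ)+1)) = 2*((t:ℝ)+3) := by
        field_simp
      have e3 : ((t:ℝ)+3)*((t:ℝ)+1)*(Vf a' (t+1) + (b:ℝ)/((t:ℝ)+3) - 2/((t:ℝ)+1))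
          = ((t:ℝ)+3)*((t:ℝ)+1)*Vf a' (t+1) + ((t:ℝ)+3)*((t:ℝ)+1)*((b:ℝ)/((t:ℝ)+3))
            - ((t:ℝ)+3)*((t:ℝ)+1)*(2/((t:ℝ)+1)) := by ring
      rw [e3, e1, e2] at h
      linarith
    have F1x : (t:ℝ)*(((t:ℝ)+3)*q2 + p2) = (t:ℝ)*((T:ℝ) - b) := by rw [hcdiv]
    have G0 := mul_le_mul_of_nonneg_left F3 (le_of_lt hx3)
    have G1 : ((t:ℝ)+3)*A ≤ ((t:ℝ)+1)*((T:ℝ) - b) + 2*(p2:ℝ) := by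
      linarith [G0, F1x, hcdiv]
    have G2 : ((t:ℝ)+1)*((T:ℝ) - b) ≤ ((t:ℝ)+3)*((t:ℝ)+1)*Vf a' (t+3) - ((t:ℝ)+1)*(b:ℝ) := by
      have h := mul_le_mul_of_nonneg_left hsum (le_of_lt hx1)
      linarith [h]
    have G3 : ((t:ℝ)+3)*A ≤ ((t:ℝ)+3)*(((t:ℝ)+1)*Vf a' (t+1)) - 2 := by
      linarith [G1, G2, F5', hcp2]
    by_contra hcon
    push_neg at hcon
    have := mul_lt_mul_of_pos_left hcon hx3
    linarith

lemma game_main {α : Type} [DecidableEq α] (k b a' : ℕ) (ha : 2 ≤ a') (hab : 2*a' ≤ b)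
    (boxes : Fin (k+1) → Finset α)
    (hdisj : Pairwise (Function.onFun Disjoint boxes)) :
    ∀ n (M B : Finset α),
      ((Finset.univ.biUnion boxes) \ (M ∪ B)).card ≤ n →
      ∀ (J P : Finset (Fin (k+1))) (q : ℕ), J.Nonempty → P ⊆ J →
      (∀ i ∈ J, Disjoint (boxes i) B) →
      (∀ i ∈ J, (boxes i \ M).card ≤ q + (if i ∈ P then 1 else 0)) →
      ((J.card * q + P.card : ℕ) : ℝ) ≤ J.card * Vf a' J.card →
      MWin (Finset.univ.biUnion boxes) {S | ∃ i, S = boxes i} b 2 true M B := by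
  classical
  have hb4 : 4 ≤ b := by omega
  intro n
  induction n using Nat.strong_induction_on with
  | _ n IH =>
  intro M B hrem J P q hJne hPJ halive hneed hsum
  set board := Finset.univ.biUnion boxes with hboard
  have hboxsub : ∀ i : Fin (k+1), boxes i ⊆ board := fun i =>
    Finset.subset_biUnion_of_mem boxes (Finset.mem_univ i)
  set rem := board \ (M ∪ B) with hremdef
  have haliveRem : ∀ i ∈ J, boxes i \ M ⊆ rem := by
    intro i hi x hx
    simp only [Finset.mem_sdiff] at hx
    simp only [hremdef, Finset.mem_sdiff, Finset.mem_union]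
    refine ⟨hboxsub i hx.1, fun h => ?_⟩
    rcases h with h | h
    · exact hx.2 h
    · exact absurd ((halive i hi).le_bot (Finset.mem_inter.mpr ⟨hx.1, h⟩)) (Finset.notMem_empty x)
  by_cases hwin : ∃ i ∈ J, (boxes i \ M).card ≤ b
  · obtain ⟨i, hiJ, hib⟩ := hwin
    by_cases hr : rem.card ≤ b
    · refine MWin.maker M B rem (le_refl _) (by rw [min_eq_right hr]) ?_
      refine MWin.win false (M ∪ rem) B (boxes i) ⟨i, rfl⟩ ?_
      intro x hx
      rw [Finset.mem_union]
      by_cases hxM : x ∈ M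
      · exact Or.inl hxM
      · exact Or.inr (haliveRem i hiJ (Finset.mem_sdiff.mpr ⟨hx, hxM⟩))
    · push_neg at hr
      obtain ⟨m, hm1, hm2, hm3⟩ :=
        Finset.exists_subsuperset_card_eq (haliveRem i hiJ) hib hr.le
      refine MWin.maker M B m hm2 (by rw [min_eq_left hr.le, hm3]) ?_
      refine MWin.win false (M ∪ m) B (boxes i) ⟨i, rfl⟩ ?_
      intro x hx
      rw [Finset.mem_union]
      by_cases hxM : x ∈ M
      · exact Or.inl hxM
      · exact Or.inr (hm1 (Finset.mem_sdiff.mpr ⟨hx, hxM⟩))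
  · push_neg at hwin
    set j := J.card with hj
    have hj1 : 1 ≤ j := Finset.card_pos.mpr hJne
    -- notation for virtual needs
    set v' : Fin (k+1) → ℕ → Finset (Fin (k+1)) → ℕ :=
      fun i qq PP => qq + (if i ∈ PP then 1 else 0) with hv'
    -- sum of virtual needs over any subset
    have hsumv : ∀ (K PP : Finset (Fin (k+1))) (qq : ℕ), PP ⊆ K →
        ∑ i ∈ K, (qq + (if i ∈ PP then 1 else 0)) = K.card * qq + PP.card := by
      intro K PP qq hPK
      rw [Finset.sum_add_distrib, Finset.sum_const, smul_eq_mul, Finset.sum_ite_mem,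
        Finset.inter_eq_right.mpr hPK, Finset.sum_const, smul_eq_mul, mul_one]
    -- if Vf a' j ≤ b we can find a small box, contradiction; hence j ≥ 3
    have hsmall : ¬ ((Vf a' j) ≤ (b:ℝ)) := by
      intro hVb
      by_cases hPJeq : P = J
      · -- q + 1 ≤ Vf
        obtain ⟨i, hiJ⟩ := hJne
        have h1 : ((j : ℝ)) * (q + 1) ≤ j * Vf a' j := by
          have : (j * q + P.card : ℕ) = j * q + j := by rw [hPJeq]
          rw [this] at hsum; push_cast at hsum; push_cast; linarith
        have h2 : ((q:ℝ) + 1) ≤ Vf a' j := by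
          have hjpos : (0:ℝ) < j := by exact_mod_cast hj1
          exact le_of_mul_le_mul_left (by linarith [h1]) hjpos
        have : ((boxes i \ M).card : ℝ) ≤ (b:ℝ) := by
          have := hneed i hiJ
          have hle : (boxes i \ M).card ≤ q + 1 := by
            split at this <;> omega
          calc ((boxes i \ M).card : ℝ) ≤ (q:ℝ) + 1 := by exact_mod_cast hle
            _ ≤ Vf a' j := h2
            _ ≤ b := hVb
        exact absurd (by exact_mod_cast this) (not_le.mpr (hwin i hiJ))
      · obtain ⟨i, hiJ, hiP⟩ : ∃ i ∈ J, i ∉ P := by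
          by_contra hcon
          push_neg at hcon
          exact hPJeq (Finset.Subset.antisymm hPJ hcon)
        have h1 : ((j : ℝ)) * q ≤ j * Vf a' j := by
          push_cast at hsum; push_cast; nlinarith [Nat.cast_nonneg (α := ℝ) P.card]
        have h2 : ((q:ℝ)) ≤ Vf a' j := by
          have hjpos : (0:ℝ) < j := by exact_mod_cast hj1
          exact le_of_mul_le_mul_left (by linarith [h1]) hjpos
        have : ((boxes i \ M).card : ℝ) ≤ (b:ℝ) := by
          have := hneed i hiJ
          rw [if_neg hiP] at this
          calc ((boxes i \ M).card : ℝ) ≤ (q:ℝ) := by exact_mod_cast (by omega : (boxes i \ M).card ≤ q)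
            _ ≤ Vf a' j := h2
            _ ≤ b := hVb
        exact absurd (by exact_mod_cast this) (not_le.mpr (hwin i hiJ))
    have hj3 : 3 ≤ j := by
      by_contra hcon
      interval_cases j
      · exact absurd (Vf_one a' ▸ (by exact_mod_cast hab : (2*(a':ℝ)) ≤ (b:ℝ))) hsmall
      · exact absurd (Vf_two a' ▸ (by exact_mod_cast hab : (2*(a':ℝ)) ≤ (b:ℝ))) hsmall
    -- main branch: j ≥ 3, all needs ≥ b+1
    obtain ⟨i0, hi0⟩ := hJne
    have hqb : b ≤ q := by
      have h1 := hwin i0 hi0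
      have h2 := hneed i0 hi0
      split at h2 <;> omega
    set p := P.card with hp
    have hpj : p ≤ j := Finset.card_le_card hPJ
    set T := j * q + p with hT
    have hbT : b ≤ j * q := le_trans hqb (Nat.le_mul_of_pos_left q (by omega))
    obtain ⟨q2, p2, hdiv, hp2j⟩ : ∃ q2 p2, j * q2 + p2 = T - b ∧ p2 < j :=
      ⟨(T - b) / j, (T - b) % j, Nat.div_add_mod _ _, Nat.mod_lt _ (by omega)⟩
    have hq2q : q2 ≤ q := by
      have hmul : j * (q+1) = j * q + j := by ring
      have hlt : j * q2 < j * (q + 1) := by omega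
      exact Nat.lt_succ_iff.mp (Nat.lt_of_mul_lt_mul_left hlt)
    have hP2ex : ∃ P2 : Finset (Fin (k+1)), P2 ⊆ J ∧ P2.card = p2 ∧ (q2 = q → P2 ⊆ P) := by
      rcases eq_or_lt_of_le hq2q with heq | hlt
      · have hjq : j * q2 = j * q := by rw [heq]
        have hple : p2 ≤ p := by omega
        obtain ⟨P2, hsub, hcard⟩ := Finset.exists_subset_card_eq (hple.trans (le_refl P.card))
        exact ⟨P2, hsub.trans hPJ, hcard, fun _ => hsub⟩
      · obtain ⟨P2, hsub, hcard⟩ := Finset.exists_subset_card_eq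
          (show p2 ≤ J.card from by omega)
        exact ⟨P2, hsub, hcard, fun h => absurd h (by omega)⟩
    obtain ⟨P2, hP2J, hP2card, hP2P⟩ := hP2ex
    have hvv : ∀ i ∈ J, q2 + (if i ∈ P2 then 1 else 0) ≤ q + (if i ∈ P then 1 else 0) := by
      intro i _
      rcases eq_or_lt_of_le hq2q with heq | hlt
      · by_cases h2 : i ∈ P2
        · rw [if_pos h2, if_pos (hP2P heq h2)]; omega
        · rw [if_neg h2]; split <;> omega
      · split <;> split <;> omega
    have hSex : ∀ i : Fin (k+1), ∃ S ⊆ boxes i \ M,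
        S.card = (boxes i \ M).card - (q2 + (if i ∈ P2 then 1 else 0)) :=
      fun i => Finset.exists_subset_card_eq (Nat.sub_le _ _)
    choose S hS1 hS2 using hSex
    have hSdisj : ∀ i ∈ J, ∀ i' ∈ J, i ≠ i' → Disjoint (S i) (S i') := by
      intro i _ i' _ hne
      exact (hdisj hne).mono ((hS1 i).trans (Finset.sdiff_subset))
        ((hS1 i').trans (Finset.sdiff_subset))
    set m0 := J.biUnion S with hm0
    have hm0sub : m0 ⊆ rem := by
      intro x hx
      rw [hm0, Finset.mem_biUnion] at hx
      obtain ⟨i, hiJ, hxS⟩ := hx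
      exact haliveRem i hiJ (hS1 i hxS)
    have hsumJv2 : ∑ i ∈ J, (q2 + (if i ∈ P2 then 1 else 0)) = j * q2 + p2 := by
      rw [hsumv J P2 q2 hP2J, hP2card]
    have hsumJv : ∑ i ∈ J, (q + (if i ∈ P then 1 else 0)) = T := by
      rw [hsumv J P q hPJ]
    have hm0card : m0.card ≤ b := by
      rw [hm0, Finset.card_biUnion hSdisj]
      have h1 : ∑ i ∈ J, (S i).card
          ≤ ∑ i ∈ J, ((q + (if i ∈ P then 1 else 0)) - (q2 + (if i ∈ P2 then 1 else 0))) := by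
        apply Finset.sum_le_sum
        intro i hiJ
        rw [hS2]
        exact Nat.sub_le_sub_right (hneed i hiJ) _
      have h2 : ∑ i ∈ J, ((q + (if i ∈ P then 1 else 0)) - (q2 + (if i ∈ P2 then 1 else 0)))
          = T - (j * q2 + p2) := by
        rw [Finset.sum_tsub_distrib J hvv, hsumJv, hsumJv2]
      omega
    have hremb : b < rem.card := by
      have hsub : J.biUnion (fun i => boxes i \ M) ⊆ rem := by
        intro x hx
        rw [Finset.mem_biUnion] at hx
        obtain ⟨i, hiJ, hxS⟩ := hx
        exact haliveRem i hiJ hxS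
      have hcardU : (J.biUnion (fun i => boxes i \ M)).card = ∑ i ∈ J, (boxes i \ M).card := by
        apply Finset.card_biUnion
        intro i _ i' _ hne
        exact (hdisj hne).mono Finset.sdiff_subset Finset.sdiff_subset
      have hlow : j * (b+1) ≤ ∑ i ∈ J, (boxes i \ M).card := by
        calc j * (b+1) = ∑ _i ∈ J, (b+1) := by rw [Finset.sum_const, smul_eq_mul]
          _ ≤ ∑ i ∈ J, (boxes i \ M).card := Finset.sum_le_sum (fun i hi => hwin i hi)
      have := Finset.card_le_card hsub
      have hj3' : 3 * (b+1) ≤ j * (b+1) := Nat.mul_le_mul_right _ hj3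
      omega
    obtain ⟨m, hm1, hm2, hm3⟩ := Finset.exists_subsuperset_card_eq hm0sub hm0card hremb.le
    refine MWin.maker M B m hm2 (by rw [min_eq_left hremb.le, hm3]) ?_
    refine MWin.breaker _ _ ?_
    intro mB hmB hmBcard
    set J2 := J.filter (fun i => Disjoint (boxes i) mB) with hJ2
    have hJ2J : J2 ⊆ J := Finset.filter_subset _ _
    have hkill : (J \ J2).card ≤ mB.card := by
      rcases mB.eq_empty_or_nonempty with hemp | ⟨x0, hx0⟩
      · have : J \ J2 = ∅ := by
          rw [Finset.sdiff_eq_empty_iff_subset]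
          intro i hi
          rw [hJ2, Finset.mem_filter]
          exact ⟨hi, by rw [hemp]; exact Finset.disjoint_empty_right _⟩
        rw [this]; simp
      · apply Finset.card_le_card_of_injOn
          (fun i => if h : (boxes i ∩ mB).Nonempty then h.choose else x0)
        · intro i hi
          rw [Finset.mem_coe, Finset.mem_sdiff, hJ2, Finset.mem_filter] at hi
          have hnd : ¬ Disjoint (boxes i) mB := fun hd => hi.2 ⟨hi.1, hd⟩
          have hne : (boxes i ∩ mB).Nonempty := by
            rw [Finset.not_disjoint_iff_nonempty_inter] at hnd; exact hnd
          simp only [Finset.mem_coe, dif_pos hne]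
          exact (Finset.mem_inter.mp hne.choose_spec).2
        · intro i hi i' hi' heq
          by_contra hne
          rw [Finset.mem_coe, Finset.mem_sdiff, hJ2, Finset.mem_filter] at hi hi'
          have hnd : ¬ Disjoint (boxes i) mB := fun hd => hi.2 ⟨hi.1, hd⟩
          have hnd' : ¬ Disjoint (boxes i') mB := fun hd => hi'.2 ⟨hi'.1, hd⟩
          rw [Finset.not_disjoint_iff_nonempty_inter] at hnd hnd'
          dsimp only at heq
          rw [dif_pos hnd, dif_pos hnd'] at heq
          have hx1 : hnd.choose ∈ boxes i := (Finset.mem_inter.mp hnd.choose_spec).1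
          have hx2 : hnd'.choose ∈ boxes i' := (Finset.mem_inter.mp hnd'.choose_spec).1
          rw [heq] at hx1
          exact (hdisj hne).le_bot (Finset.mem_inter.mpr ⟨hx1, hx2⟩) |> Finset.notMem_empty _
    have hmB2 : mB.card ≤ 2 := by rw [hmBcard]; exact min_le_left _ _
    have hsdcard : (J \ J2).card = j - J2.card := by rw [Finset.card_sdiff_of_subset hJ2J]
    set j2 := J2.card with hj2
    have hj2le : j2 ≤ j := Finset.card_le_card hJ2J
    have hdle : j - j2 ≤ 2 := by omega
    have hj2pos : 1 ≤ j2 := by omega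
    have hJ2ne : J2.Nonempty := Finset.card_pos.mp hj2pos
    -- invariant components
    have halive2 : ∀ i ∈ J2, Disjoint (boxes i) (B ∪ mB) := by
      intro i hi
      rw [hJ2, Finset.mem_filter] at hi
      exact Finset.disjoint_union_right.mpr ⟨halive i hi.1, hi.2⟩
    have hneed2 : ∀ i ∈ J2, (boxes i \ (M ∪ m)).card ≤ q2 + (if i ∈ P2 ∩ J2 then 1 else 0) := by
      intro i hi
      have hiJ : i ∈ J := hJ2J hi
      have hsub : boxes i \ (M ∪ m) ⊆ (boxes i \ M) \ S i := by
        intro x hx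
        rw [Finset.mem_sdiff, Finset.mem_union] at hx
        push_neg at hx
        rw [Finset.mem_sdiff, Finset.mem_sdiff]
        exact ⟨⟨hx.1, hx.2.1⟩, fun hxS => hx.2.2 (hm1 (by
          rw [hm0, Finset.mem_biUnion]; exact ⟨i, hiJ, hxS⟩))⟩
      have hc1 : ((boxes i \ M) \ S i).card = (boxes i \ M).card - (S i).card :=
        Finset.card_sdiff_of_subset (hS1 i)
      have hc2 := hS2 i
      have hcl := Finset.card_le_card hsub
      by_cases hP : i ∈ P2
      · rw [if_pos (Finset.mem_inter.mpr ⟨hP, hi⟩)]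
        rw [if_pos hP] at hc2
        omega
      · rw [if_neg (fun hc => hP (Finset.mem_inter.mp hc).1)]
        rw [if_neg hP] at hc2
        omega
    -- sum invariant
    have hsumJ2 : j2 * q2 + (P2 ∩ J2).card + (j - j2) * q2 ≤ j * q2 + p2 := by
      have e1 : ∑ i ∈ J2, (q2 + (if i ∈ P2 ∩ J2 then 1 else 0)) = j2 * q2 + (P2 ∩ J2).card :=
        hsumv J2 (P2 ∩ J2) q2 (Finset.inter_subset_right)
      have e2 : ∑ i ∈ J2, (q2 + (if i ∈ P2 ∩ J2 then 1 else 0))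
          ≤ ∑ i ∈ J2, (q2 + (if i ∈ P2 then 1 else 0)) := by
        apply Finset.sum_le_sum
        intro i hi
        by_cases hP : i ∈ P2
        · rw [if_pos hP]; split <;> omega
        · rw [if_neg hP, if_neg (fun hc => hP (Finset.mem_inter.mp hc).1)]
      have e3 : ∑ i ∈ J \ J2, (q2 + (if i ∈ P2 then 1 else 0)) + ∑ i ∈ J2, (q2 + (if i ∈ P2 then 1 else 0))
          = ∑ i ∈ J, (q2 + (if i ∈ P2 then 1 else 0)) := Finset.sum_sdiff hJ2J
      have e4 : (J \ J2).card * q2 ≤ ∑ i ∈ J \ J2, (q2 + (if i ∈ P2 then 1 else 0)) := by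
        calc (J \ J2).card * q2 = ∑ _i ∈ J \ J2, q2 := by rw [Finset.sum_const, smul_eq_mul]
          _ ≤ _ := Finset.sum_le_sum (fun i _ => by omega)
      rw [hsumJv2] at e3
      rw [hsdcard] at e4
      have hmul2 : j2 * q2 + (j - j2) * q2 = j * q2 := by
        rw [← Nat.add_mul]
        congr 1
        omega
      omega
    have hsum2 : ((j2 * q2 + (P2 ∩ J2).card : ℕ) : ℝ) ≤ j2 * Vf a' j2 :=
      sum_step a' b ha hab j j2 _ T q2 p2 hj3 hj2pos hj2le hdle (by omega) hdiv hp2j hsumJ2 hsum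
    -- recursion
    have hrem2sub : board \ ((M ∪ m) ∪ (B ∪ mB)) ⊆ rem \ m := by
      intro x hx
      rw [Finset.mem_sdiff, Finset.mem_union, Finset.mem_union, Finset.mem_union] at hx
      push_neg at hx
      rw [Finset.mem_sdiff, hremdef, Finset.mem_sdiff, Finset.mem_union]
      exact ⟨⟨hx.1, fun hc => hc.elim hx.2.1.1 hx.2.2.1⟩, hx.2.1.2⟩
    have hrem2card : (board \ ((M ∪ m) ∪ (B ∪ mB))).card < n := by
      have h1 := Finset.card_le_card hrem2sub
      have h2 : (rem \ m).card = rem.card - m.card := Finset.card_sdiff_of_subset hm2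
      omega
    exact IH _ hrem2card (M ∪ m) (B ∪ mB) le_rfl J2 (P2 ∩ J2) q2 hJ2ne
      (Finset.inter_subset_right) halive2 hneed2 hsum2


/-- If the Chvátal–Erdős criterion holds for the `(b : 1)` game with `k` pairwise
disjoint boxes of size `s` (Maker wins whenever `s ≤ (b-1)∑_{i=1}^{k-1} 1/i`),
then in the `(b : 2)` game with `k + 1` pairwise disjoint boxes of size at most
`s`, Maker wins whenever `s ≤ (⌊b/2⌋ - 1)∑_{i=1}^{k-1} 1/i`. -/
theorem stmt10 (b k s : ℕ)
    (H : ∀ (α : Type) [DecidableEq α] (boxes : Fin k → Finset α),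
      Pairwise (Function.onFun Disjoint boxes) →
      (∀ i, (boxes i).card = s) →
      ((s : ℝ) ≤ ((b : ℝ) - 1) * ∑ i ∈ Finset.Icc 1 (k - 1), (1 : ℝ) / i) →
      MWin (Finset.univ.biUnion boxes) {S | ∃ i, S = boxes i} b 1 true ∅ ∅)
    (α : Type) [DecidableEq α] (boxes : Fin (k + 1) → Finset α)
    (hdisj : Pairwise (Function.onFun Disjoint boxes))
    (hcard : ∀ i, (boxes i).card ≤ s)
    (hs : (s : ℝ) ≤ ((b / 2 : ℕ) - 1 : ℝ) * ∑ i ∈ Finset.Icc 1 (k - 1), (1 : ℝ) / i) :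
    MWin (Finset.univ.biUnion boxes) {S | ∃ i, S = boxes i} b 2 true ∅ ∅ := by
  classical
  by_cases hs0 : s = 0
  · refine MWin.win true ∅ ∅ (boxes 0) ⟨0, rfl⟩ ?_
    have hb0 : boxes 0 = ∅ := Finset.card_eq_zero.mp (by have := hcard 0; omega)
    simp [hb0]
  · have hs1 : 1 ≤ s := by omega
    have hH0 : 0 ≤ ∑ i ∈ Finset.Icc 1 (k - 1), (1:ℝ)/i :=
      Finset.sum_nonneg (fun i _ => by positivity)
    have ha2 : 2 ≤ b / 2 := by
      by_contra hcon
      push_neg at hcon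
      have h1 : ((b/2 : ℕ):ℝ) ≤ 1 := by exact_mod_cast (by omega : b/2 ≤ 1)
      have hle : ((b/2 : ℕ):ℝ) - 1 ≤ 0 := by linarith
      have h2 : (s:ℝ) ≤ 0 := le_trans hs (mul_nonpos_of_nonpos_of_nonneg hle hH0)
      have h3 : (1:ℝ) ≤ (s:ℝ) := by exact_mod_cast hs1
      linarith
    have hab : 2 * (b/2) ≤ b := by omega
    refine game_main k b (b/2) ha2 hab boxes hdisj
      ((Finset.univ.biUnion boxes) \ (∅ ∪ ∅)).card ∅ ∅ le_rfl
      Finset.univ ∅ s ⟨0, Finset.mem_univ 0⟩ (Finset.empty_subset _)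
      (fun i _ => Finset.disjoint_empty_right _)
      (fun i _ => by simpa using hcard i) ?_
    simp only [Finset.card_empty, Finset.card_univ, Fintype.card_fin, add_zero]
    have hk2 : (k+1) - 2 = k - 1 := by omega
    have hV : (s:ℝ) ≤ Vf (b/2) (k+1) := by
      unfold Vf
      rw [hk2]
      have h1 : (s:ℝ) ≤ (((b/2 : ℕ):ℝ) - 1) * Hh (k-1) := by unfold Hh; exact hs
      have h2 : 0 ≤ ((b/2 : ℕ):ℝ) * rho (k+1) :=
        mul_nonneg (Nat.cast_nonneg _) (rho_nonneg _)
      linarith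
    have hkpos : (0:ℝ) ≤ ((k:ℝ)+1) := by positivity
    have := mul_le_mul_of_nonneg_left hV hkpos
    push_cast
    linarith
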